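/- The DePa query algorithm is correct: let v be a vertex with no proper descendants having v's fork-path as a strict prefix at greater depth (i.e., v is the current vertex of a leaf task, so that for every strict prefix p of f(v), the suspended-depth table stores the maximum dag-depth among vertices with fork-path p that precede v). Then for any vertex u, with p = lcp(f(u), f(v)): if p = f(v), then u ≼ v iff d(u) ≤ d(v); otherwise u ≼ v iff d(u) ≤ SuspendedDepths[p]. -/

import Mathlib

/-- Series-parallel dag shapes: a single vertex, serial composition
(identifying the sink of `g1` with the source of `g2`), or parallel
composition (fresh source with edges to the sources of `g1`, `g2`, and a
fresh sink with edges from their sinks). -/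
inductive SP : Type where
  | vert : SP
  | seq : SP → SP → SP
  | par : SP → SP → SP

/-- Non-source vertices of a series-parallel dag. -/
def NV : SP → Type
  | .vert => Empty
  | .seq g1 g2 => NV g1 ⊕ NV g2
  | .par g1 g2 => ((Unit ⊕ NV g1) ⊕ (Unit ⊕ NV g2)) ⊕ Unit

/-- Vertices: the source, or a non-source vertex. -/
abbrev V (g : SP) : Type := Unit ⊕ NV g

/-- The (unique) source of a series-parallel dag. -/
def src (g : SP) : V g := Sum.inl ()

/-- Embedding of the first component of a serial composition. -/
def emb1 (g1 g2 : SP) : V g1 → V (.seq g1 g2)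
  | .inl _ => Sum.inl ()
  | .inr n => Sum.inr (Sum.inl n)

/-- The (unique) sink of a series-parallel dag. -/
def snk : (g : SP) → V g
  | .vert => Sum.inl ()
  | .seq g1 g2 =>
    match snk g2 with
    | .inl _ => emb1 g1 g2 (snk g1)
    | .inr n => Sum.inr (Sum.inr n)
  | .par _ _ => Sum.inr (Sum.inr ())

/-- Embedding of the second component of a serial composition:
the source of `g2` is identified with the sink of `g1`. -/
def emb2 (g1 g2 : SP) : V g2 → V (.seq g1 g2)
  | .inl _ => emb1 g1 g2 (snk g1)
  | .inr n => Sum.inr (Sum.inr n)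

/-- Embedding of the left branch of a parallel composition. -/
def embL (g1 g2 : SP) (v : V g1) : V (.par g1 g2) := Sum.inr (Sum.inl (Sum.inl v))

/-- Embedding of the right branch of a parallel composition. -/
def embR (g1 g2 : SP) (v : V g2) : V (.par g1 g2) := Sum.inr (Sum.inl (Sum.inr v))

/-- Edges of a series-parallel dag. -/
def Edge : (g : SP) → V g → V g → Prop
  | .vert, _, _ => False
  | .seq g1 g2, u, v =>
      (∃ a b, Edge g1 a b ∧ u = emb1 g1 g2 a ∧ v = emb1 g1 g2 b) ∨
      (∃ a b, Edge g2 a b ∧ u = emb2 g1 g2 a ∧ v = emb2 g1 g2 b)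
  | .par g1 g2, u, v =>
      (∃ a b, Edge g1 a b ∧ u = embL g1 g2 a ∧ v = embL g1 g2 b) ∨
      (∃ a b, Edge g2 a b ∧ u = embR g1 g2 a ∧ v = embR g1 g2 b) ∨
      (u = src (.par g1 g2) ∧ v = embL g1 g2 (src g1)) ∨
      (u = src (.par g1 g2) ∧ v = embR g1 g2 (src g2)) ∨
      (u = embL g1 g2 (snk g1) ∧ v = snk (.par g1 g2)) ∨
      (u = embR g1 g2 (snk g2) ∧ v = snk (.par g1 g2))

/-- `Reach g u v` (`u ≼ v`): there is a directed path (possibly empty) from `u` to `v`. -/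
def Reach (g : SP) : V g → V g → Prop := Relation.ReflTransGen (Edge g)

/-- The dag-depth of a vertex (the length of a longest path ending at it),
computed by the DePa rules: the source has depth 0; at a fork both children
have depth one greater; at a join the new vertex has depth
`1 + max` of the depths of the joining vertices. -/
def depth : (g : SP) → V g → ℕ
  | .vert, _ => 0
  | .seq _ _, .inl _ => 0
  | .seq g1 _, .inr (.inl n) => depth g1 (Sum.inr n)
  | .seq g1 g2, .inr (.inr n) => depth g1 (snk g1) + depth g2 (Sum.inr n)
  | .par _ _, .inl _ => 0
  | .par g1 _, .inr (.inl (.inl v)) => 1 + depth g1 v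
  | .par _ g2, .inr (.inl (.inr v)) => 1 + depth g2 v
  | .par g1 g2, .inr (.inr _) => 1 + max (1 + depth g1 (snk g1)) (1 + depth g2 (snk g2))

/-- The fork-path of a vertex, as a list of bits (`false` = L, `true` = R),
outermost fork first: the root has the empty path, a fork extends the path by
L and R for the two branches, and a join restores the common prefix. -/
def fpath : (g : SP) → V g → List Bool
  | .vert, _ => []
  | .seq _ _, .inl _ => []
  | .seq g1 _, .inr (.inl n) => fpath g1 (Sum.inr n)
  | .seq _ g2, .inr (.inr n) => fpath g2 (Sum.inr n)
  | .par _ _, .inl _ => []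
  | .par g1 _, .inr (.inl (.inl v)) => false :: fpath g1 v
  | .par _ g2, .inr (.inl (.inr v)) => true :: fpath g2 v
  | .par _ _, .inr (.inr _) => []

/-- Longest common prefix of two lists. -/
def lcp : List Bool → List Bool → List Bool
  | a :: as, b :: bs => if a = b then a :: lcp as bs else []
  | _, _ => []


open Relation List in
theorem lcp_prefix_left : ∀ a b : List Bool, lcp a b <+: a := by
  intro a
  induction a with
  | nil => intro b; cases b <;> simp [lcp]
  | cons x as ih =>
    intro b
    cases b with
    | nil => simp [lcp]
    | cons y bs =>
      by_cases h : x = y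
      · subst h; simpa [lcp] using ih bs
      · simp [lcp, h]

open Relation List in
theorem lcp_prefix_right : ∀ a b : List Bool, lcp a b <+: b := by
  intro a
  induction a with
  | nil => intro b; cases b <;> simp [lcp]
  | cons x as ih =>
    intro b
    cases b with
    | nil => simp [lcp]
    | cons y bs =>
      by_cases h : x = y
      · subst h; simpa [lcp] using ih bs
      · simp [lcp, h]

open List in
theorem prefix_lcp : ∀ (p a b : List Bool), p <+: a → p <+: b → p <+: lcp a b := by
  intro p
  induction p with
  | nil => intro a b _ _; exact nil_prefix
  | cons x p' ih =>
    intro a b h1 h2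
    cases a with
    | nil => exact absurd (eq_nil_of_prefix_nil h1) (by simp)
    | cons a' as =>
      cases b with
      | nil => exact absurd (eq_nil_of_prefix_nil h2) (by simp)
      | cons b' bs =>
        obtain ⟨rfl, h1'⟩ := cons_prefix_cons.1 h1
        obtain ⟨rfl, h2'⟩ := cons_prefix_cons.1 h2
        simpa [lcp] using ih as bs h1' h2'

theorem prefix_antisymm {a b : List Bool} (h1 : a <+: b) (h2 : b <+: a) : a = b :=
  h1.eq_of_length (Nat.le_antisymm h1.length_le h2.length_le)

theorem lcp_eq_left {a b : List Bool} (h : a <+: b) : lcp a b = a :=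
  prefix_antisymm (lcp_prefix_left a b) (prefix_lcp a a b List.prefix_rfl h)

theorem lcp_self (a : List Bool) : lcp a a = a := lcp_eq_left List.prefix_rfl

theorem fpath_src (g : SP) (x : Unit) : fpath g (Sum.inl x) = [] := by
  cases g <;> rfl

theorem depth_src (g : SP) (x : Unit) : depth g (Sum.inl x) = 0 := by
  cases g <;> rfl

theorem fpath_emb1 (g1 g2 : SP) (a : V g1) :
    fpath (.seq g1 g2) (emb1 g1 g2 a) = fpath g1 a := by
  cases a with
  | inl x => simp [emb1, fpath, fpath_src]
  | inr n => rfl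

theorem fpath_snk : ∀ g : SP, fpath g (snk g) = [] := by
  intro g
  induction g with
  | vert => rfl
  | seq g1 g2 ih1 ih2 =>
    show fpath _ (snk (.seq g1 g2)) = []
    unfold snk
    cases h : snk g2 with
    | inl x => rw [fpath_emb1]; exact ih1
    | inr n => have := ih2; rw [h] at this; exact this
  | par g1 g2 ih1 ih2 => rfl

theorem snk_seq (g1 g2 : SP) : snk (.seq g1 g2) = emb2 g1 g2 (snk g2) := by
  show (match snk g2 with
    | .inl _ => emb1 g1 g2 (snk g1)
    | .inr n => Sum.inr (Sum.inr n)) = emb2 g1 g2 (snk g2)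
  cases h : snk g2 with
  | inl x => rfl
  | inr n => rfl

theorem fpath_emb2 (g1 g2 : SP) (b : V g2) :
    fpath (.seq g1 g2) (emb2 g1 g2 b) = fpath g2 b := by
  cases b with
  | inl x =>
    show fpath (.seq g1 g2) (emb1 g1 g2 (snk g1)) = _
    rw [fpath_emb1, fpath_snk, fpath_src]
  | inr n => rfl

theorem depth_emb1 (g1 g2 : SP) (a : V g1) :
    depth (.seq g1 g2) (emb1 g1 g2 a) = depth g1 a := by
  cases a with
  | inl x => simp [emb1, depth, depth_src]
  | inr n => rfl

theorem depth_emb2 (g1 g2 : SP) (b : V g2) :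
    depth (.seq g1 g2) (emb2 g1 g2 b) = depth g1 (snk g1) + depth g2 b := by
  cases b with
  | inl x =>
    show depth (.seq g1 g2) (emb1 g1 g2 (snk g1)) = _
    rw [depth_emb1, depth_src]; exact (Nat.add_zero _).symm
  | inr n => rfl

theorem edge_emb1 {g1 : SP} (g2 : SP) {a b : V g1} (h : Edge g1 a b) :
    Edge (.seq g1 g2) (emb1 g1 g2 a) (emb1 g1 g2 b) := Or.inl ⟨a, b, h, rfl, rfl⟩

theorem edge_emb2 (g1 : SP) {g2 : SP} {a b : V g2} (h : Edge g2 a b) :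
    Edge (.seq g1 g2) (emb2 g1 g2 a) (emb2 g1 g2 b) := Or.inr ⟨a, b, h, rfl, rfl⟩

theorem edge_embL {g1 : SP} (g2 : SP) {a b : V g1} (h : Edge g1 a b) :
    Edge (.par g1 g2) (embL g1 g2 a) (embL g1 g2 b) := Or.inl ⟨a, b, h, rfl, rfl⟩

theorem edge_embR (g1 : SP) {g2 : SP} {a b : V g2} (h : Edge g2 a b) :
    Edge (.par g1 g2) (embR g1 g2 a) (embR g1 g2 b) := Or.inr (Or.inl ⟨a, b, h, rfl, rfl⟩)

theorem reach_emb1 {g1 : SP} (g2 : SP) {a b : V g1} (h : Reach g1 a b) :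
    Reach (.seq g1 g2) (emb1 g1 g2 a) (emb1 g1 g2 b) :=
  Relation.ReflTransGen.lift (emb1 g1 g2) (fun _ _ e => edge_emb1 g2 e) _ _ h

theorem reach_emb2 (g1 : SP) {g2 : SP} {a b : V g2} (h : Reach g2 a b) :
    Reach (.seq g1 g2) (emb2 g1 g2 a) (emb2 g1 g2 b) :=
  Relation.ReflTransGen.lift (emb2 g1 g2) (fun _ _ e => edge_emb2 g1 e) _ _ h

theorem reach_embL {g1 : SP} (g2 : SP) {a b : V g1} (h : Reach g1 a b) :
    Reach (.par g1 g2) (embL g1 g2 a) (embL g1 g2 b) :=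
  Relation.ReflTransGen.lift (embL g1 g2) (fun _ _ e => edge_embL g2 e) _ _ h

theorem reach_embR (g1 : SP) {g2 : SP} {a b : V g2} (h : Reach g2 a b) :
    Reach (.par g1 g2) (embR g1 g2 a) (embR g1 g2 b) :=
  Relation.ReflTransGen.lift (embR g1 g2) (fun _ _ e => edge_embR g1 e) _ _ h

theorem src_reach : ∀ (g : SP) (w : V g), Reach g (src g) w := by
  intro g
  induction g with
  | vert =>
    intro w
    cases w with
    | inl x => exact Relation.ReflTransGen.refl
    | inr n => exact n.elim
  | seq g1 g2 ih1 ih2 =>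
    intro w
    cases w with
    | inl x => exact Relation.ReflTransGen.refl
    | inr n =>
      cases n with
      | inl n =>
        exact reach_emb1 g2 (ih1 (Sum.inr n))
      | inr n =>
        exact (reach_emb1 g2 (ih1 (snk g1))).trans (reach_emb2 g1 (ih2 (Sum.inr n)))
  | par g1 g2 ih1 ih2 =>
    intro w
    have hL : Reach (.par g1 g2) (src _) (embL g1 g2 (src g1)) :=
      Relation.ReflTransGen.single (Or.inr (Or.inr (Or.inl ⟨rfl, rfl⟩)))
    have hR : Reach (.par g1 g2) (src _) (embR g1 g2 (src g2)) :=
      Relation.ReflTransGen.single (Or.inr (Or.inr (Or.inr (Or.inl ⟨rfl, rfl⟩))))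
    cases w with
    | inl x => exact Relation.ReflTransGen.refl
    | inr n =>
      cases n with
      | inl n =>
        cases n with
        | inl a => exact hL.trans (reach_embL g2 (ih1 a))
        | inr a => exact hR.trans (reach_embR g1 (ih2 a))
      | inr x =>
        refine ((hL.trans (reach_embL g2 (ih1 (snk g1)))).tail ?_)
        exact Or.inr (Or.inr (Or.inr (Or.inr (Or.inl ⟨rfl, rfl⟩))))

theorem reach_snk : ∀ (g : SP) (w : V g), Reach g w (snk g) := by
  intro g
  induction g with
  | vert =>
    intro w
    cases w with
    | inl x => exact Relation.ReflTransGen.refl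
    | inr n => exact n.elim
  | seq g1 g2 ih1 ih2 =>
    intro w
    rw [snk_seq]
    have key : ∀ a : V g1, Reach (.seq g1 g2) (emb1 g1 g2 a) (emb2 g1 g2 (snk g2)) := by
      intro a
      have h1 : Reach (.seq g1 g2) (emb1 g1 g2 a) (emb1 g1 g2 (snk g1)) :=
        reach_emb1 g2 (ih1 a)
      have h2 : Reach (.seq g1 g2) (emb2 g1 g2 (src g2)) (emb2 g1 g2 (snk g2)) :=
        reach_emb2 g1 (ih2 (src g2))
      exact h1.trans h2
    cases w with
    | inl x => exact key (src g1)
    | inr n =>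
      cases n with
      | inl n => exact key (Sum.inr n)
      | inr n => exact reach_emb2 g1 (ih2 (Sum.inr n))
  | par g1 g2 ih1 ih2 =>
    intro w
    have hL : Reach (.par g1 g2) (embL g1 g2 (snk g1)) (snk (.par g1 g2)) :=
      Relation.ReflTransGen.single (Or.inr (Or.inr (Or.inr (Or.inr (Or.inl ⟨rfl, rfl⟩)))))
    have hR : Reach (.par g1 g2) (embR g1 g2 (snk g2)) (snk (.par g1 g2)) :=
      Relation.ReflTransGen.single (Or.inr (Or.inr (Or.inr (Or.inr (Or.inr ⟨rfl, rfl⟩)))))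
    cases w with
    | inl x => exact src_reach _ _
    | inr n =>
      cases n with
      | inl n =>
        cases n with
        | inl a => exact (reach_embL g2 (ih1 a)).trans hL
        | inr a => exact (reach_embR g1 (ih2 a)).trans hR
      | inr x => exact Relation.ReflTransGen.refl

theorem edge_depth_lt : ∀ (g : SP) (a b : V g), Edge g a b → depth g a < depth g b := by
  intro g
  induction g with
  | vert => intro a b h; exact h.elim
  | seq g1 g2 ih1 ih2 =>
    rintro a b (⟨x, y, e, rfl, rfl⟩ | ⟨x, y, e, rfl, rfl⟩)
    · rw [depth_emb1, depth_emb1]; exact ih1 x y e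
    · rw [depth_emb2, depth_emb2]; exact Nat.add_lt_add_left (ih2 x y e) _
  | par g1 g2 ih1 ih2 =>
    rintro a b (⟨x, y, e, rfl, rfl⟩ | ⟨x, y, e, rfl, rfl⟩ | ⟨rfl, rfl⟩ | ⟨rfl, rfl⟩ |
      ⟨rfl, rfl⟩ | ⟨rfl, rfl⟩)
    · exact Nat.add_lt_add_left (ih1 x y e) 1
    · exact Nat.add_lt_add_left (ih2 x y e) 1
    · show depth _ (Sum.inl ()) < 1 + depth g1 (src g1)
      rw [depth_src]; omega
    · show depth _ (Sum.inl ()) < 1 + depth g2 (src g2)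
      rw [depth_src]; omega
    · show 1 + depth g1 (snk g1) < 1 + max (1 + depth g1 (snk g1)) (1 + depth g2 (snk g2))
      have := Nat.le_max_left (1 + depth g1 (snk g1)) (1 + depth g2 (snk g2))
      omega
    · show 1 + depth g2 (snk g2) < 1 + max (1 + depth g1 (snk g1)) (1 + depth g2 (snk g2))
      have := Nat.le_max_right (1 + depth g1 (snk g1)) (1 + depth g2 (snk g2))
      omega

theorem reach_depth_le {g : SP} {a b : V g} (h : Reach g a b) : depth g a ≤ depth g b := by
  induction h with
  | refl => exact le_refl _
  | tail _ e ih => exact ih.trans (edge_depth_lt _ _ _ e).le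

theorem reach_eq_of_depth_le {g : SP} {a b : V g} (h : Reach g a b)
    (hd : depth g b ≤ depth g a) : a = b := by
  cases (Relation.reflTransGen_iff_eq_or_transGen.mp h) with
  | inl h' => exact h'.symm
  | inr h' =>
    exfalso
    have : depth g a < depth g b := by
      clear hd h
      induction h' with
      | single e => exact edge_depth_lt _ _ _ e
      | tail _ e ih => exact ih.trans (edge_depth_lt _ _ _ e)
    omega

theorem edge_fpath : ∀ (g : SP) (a b : V g), Edge g a b →
    (∃ x, fpath g b = fpath g a ++ [x]) ∨ (∃ x, fpath g a = fpath g b ++ [x]) := by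
  intro g
  induction g with
  | vert => intro a b h; exact h.elim
  | seq g1 g2 ih1 ih2 =>
    rintro a b (⟨x, y, e, rfl, rfl⟩ | ⟨x, y, e, rfl, rfl⟩)
    · rw [fpath_emb1, fpath_emb1]; exact ih1 x y e
    · rw [fpath_emb2, fpath_emb2]; exact ih2 x y e
  | par g1 g2 ih1 ih2 =>
    rintro a b (⟨x, y, e, rfl, rfl⟩ | ⟨x, y, e, rfl, rfl⟩ | ⟨rfl, rfl⟩ | ⟨rfl, rfl⟩ |
      ⟨rfl, rfl⟩ | ⟨rfl, rfl⟩)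
    · show (∃ z, false :: fpath g1 y = false :: fpath g1 x ++ [z]) ∨
        (∃ z, false :: fpath g1 x = false :: fpath g1 y ++ [z])
      rcases ih1 x y e with ⟨z, hz⟩ | ⟨z, hz⟩
      · exact Or.inl ⟨z, by rw [hz]; rfl⟩
      · exact Or.inr ⟨z, by rw [hz]; rfl⟩
    · show (∃ z, true :: fpath g2 y = true :: fpath g2 x ++ [z]) ∨
        (∃ z, true :: fpath g2 x = true :: fpath g2 y ++ [z])
      rcases ih2 x y e with ⟨z, hz⟩ | ⟨z, hz⟩
      · exact Or.inl ⟨z, by rw [hz]; rfl⟩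
      · exact Or.inr ⟨z, by rw [hz]; rfl⟩
    · left
      refine ⟨false, ?_⟩
      show false :: fpath g1 (src g1) = fpath _ (Sum.inl ()) ++ [false]
      rw [fpath_src]; rw [show src g1 = Sum.inl () from rfl, fpath_src]; rfl
    · left
      refine ⟨true, ?_⟩
      show true :: fpath g2 (src g2) = fpath _ (Sum.inl ()) ++ [true]
      rw [fpath_src]; rw [show src g2 = Sum.inl () from rfl, fpath_src]; rfl
    · right
      refine ⟨false, ?_⟩
      show false :: fpath g1 (snk g1) = fpath _ (snk (.par g1 g2)) ++ [false]
      rw [fpath_snk]; rfl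
    · right
      refine ⟨true, ?_⟩
      show true :: fpath g2 (snk g2) = fpath _ (snk (.par g1 g2)) ++ [true]
      rw [fpath_snk]; rfl

theorem reach_total_of_prefix : ∀ (g : SP) (u v : V g),
    (fpath g u <+: fpath g v ∨ fpath g v <+: fpath g u) → Reach g u v ∨ Reach g v u := by
  intro g
  induction g with
  | vert =>
    intro u v _
    cases u with
    | inl x => exact Or.inl (src_reach _ _)
    | inr n => exact n.elim
  | seq g1 g2 ih1 ih2 =>
    intro u v hp
    obtain x | (n | n) := u
    · exact Or.inl (src_reach _ _)
    all_goals obtain x | (m | m) := v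
    · exact Or.inr (src_reach _ _)
    · have hp' : fpath g1 (Sum.inr n) <+: fpath g1 (Sum.inr m) ∨
        fpath g1 (Sum.inr m) <+: fpath g1 (Sum.inr n) := hp
      rcases ih1 (Sum.inr n) (Sum.inr m) hp' with h | h
      · exact Or.inl (reach_emb1 g2 h)
      · exact Or.inr (reach_emb1 g2 h)
    · exact Or.inl ((reach_emb1 g2 (reach_snk g1 (Sum.inr n))).trans
        (reach_emb2 g1 (src_reach g2 (Sum.inr m))))
    · exact Or.inr (src_reach _ _)
    · exact Or.inr ((reach_emb1 g2 (reach_snk g1 (Sum.inr m))).trans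
        (reach_emb2 g1 (src_reach g2 (Sum.inr n))))
    · have hp' : fpath g2 (Sum.inr n) <+: fpath g2 (Sum.inr m) ∨
        fpath g2 (Sum.inr m) <+: fpath g2 (Sum.inr n) := hp
      rcases ih2 (Sum.inr n) (Sum.inr m) hp' with h | h
      · exact Or.inl (reach_emb2 g1 h)
      · exact Or.inr (reach_emb2 g1 h)
  | par g1 g2 ih1 ih2 =>
    intro u v hp
    obtain x | ((a | a) | x) := u
    · exact Or.inl (src_reach _ _)
    rotate_right
    · exact Or.inr (reach_snk _ _)
    all_goals obtain y | ((b | b) | y) := v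
    · exact Or.inr (src_reach _ _)
    · have hp' : (false :: fpath g1 a <+: false :: fpath g1 b) ∨
        (false :: fpath g1 b <+: false :: fpath g1 a) := hp
      have hp'' : fpath g1 a <+: fpath g1 b ∨ fpath g1 b <+: fpath g1 a := by
        rcases hp' with h | h
        · exact Or.inl (List.cons_prefix_cons.1 h).2
        · exact Or.inr (List.cons_prefix_cons.1 h).2
      rcases ih1 a b hp'' with h | h
      · exact Or.inl (reach_embL g2 h)
      · exact Or.inr (reach_embL g2 h)
    · exfalso
      have hp' : (false :: fpath g1 a <+: true :: fpath g2 b) ∨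
        (true :: fpath g2 b <+: false :: fpath g1 a) := hp
      rcases hp' with h | h
      · exact absurd (List.cons_prefix_cons.1 h).1 (by simp)
      · exact absurd (List.cons_prefix_cons.1 h).1 (by simp)
    · exact Or.inl (reach_snk _ _)
    · exact Or.inr (src_reach _ _)
    · exfalso
      have hp' : (true :: fpath g2 a <+: false :: fpath g1 b) ∨
        (false :: fpath g1 b <+: true :: fpath g2 a) := hp
      rcases hp' with h | h
      · exact absurd (List.cons_prefix_cons.1 h).1 (by simp)
      · exact absurd (List.cons_prefix_cons.1 h).1 (by simp)
    · have hp' : (true :: fpath g2 a <+: true :: fpath g2 b) ∨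
        (true :: fpath g2 b <+: true :: fpath g2 a) := hp
      have hp'' : fpath g2 a <+: fpath g2 b ∨ fpath g2 b <+: fpath g2 a := by
        rcases hp' with h | h
        · exact Or.inl (List.cons_prefix_cons.1 h).2
        · exact Or.inr (List.cons_prefix_cons.1 h).2
      rcases ih2 a b hp'' with h | h
      · exact Or.inl (reach_embR g1 h)
      · exact Or.inr (reach_embR g1 h)
    · exact Or.inl (reach_snk _ _)

theorem prefix_concat_cases {p l : List Bool} {b : Bool} (h : p <+: l ++ [b]) :
    p = l ++ [b] ∨ p <+: l := by
  by_cases hlen : p.length ≤ l.length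
  · exact Or.inr (List.prefix_of_prefix_length_le h (List.prefix_append l [b]) hlen)
  · left
    apply h.eq_of_length
    have := h.length_le
    simp at this ⊢
    omega

theorem lcp_witness {g : SP} {u v : V g} (h : Reach g u v) :
    ∃ w : V g, fpath g w = lcp (fpath g u) (fpath g v) ∧ Reach g u w ∧ Reach g w v := by
  induction h using Relation.ReflTransGen.head_induction_on with
  | refl =>
    exact ⟨v, (lcp_self _).symm, Relation.ReflTransGen.refl, Relation.ReflTransGen.refl⟩
  | @head x y e h' ih =>
    obtain ⟨w', hw', hyw', hw'v⟩ := ih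
    rcases edge_fpath g x y e with ⟨b, hb⟩ | ⟨b, hb⟩
    · -- push: fpath y = fpath x ++ [b]
      by_cases hp : fpath g x ++ [b] <+: fpath g v
      · have hxv : fpath g x <+: fpath g v := (List.prefix_append _ _).trans hp
        exact ⟨x, (lcp_eq_left hxv).symm, Relation.ReflTransGen.refl,
          Relation.ReflTransGen.head e h'⟩
      · refine ⟨w', ?_, Relation.ReflTransGen.head e hyw', hw'v⟩
        rw [hw', hb]
        apply prefix_antisymm
        · have h1 := lcp_prefix_left (fpath g x ++ [b]) (fpath g v)
          have h2 := lcp_prefix_right (fpath g x ++ [b]) (fpath g v)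
          rcases prefix_concat_cases h1 with heq | hpre
          · exact absurd (heq ▸ h2) hp
          · exact prefix_lcp _ _ _ hpre h2
        · exact prefix_lcp _ _ _ ((lcp_prefix_left _ _).trans (List.prefix_append _ _))
            (lcp_prefix_right _ _)
    · -- pop: fpath x = fpath y ++ [b]
      by_cases hp : fpath g x <+: fpath g v
      · exact ⟨x, (lcp_eq_left hp).symm, Relation.ReflTransGen.refl,
          Relation.ReflTransGen.head e h'⟩
      · refine ⟨w', ?_, Relation.ReflTransGen.head e hyw', hw'v⟩
        rw [hw']
        apply prefix_antisymm
        · refine prefix_lcp _ _ _ ((lcp_prefix_left _ _).trans ?_) (lcp_prefix_right _ _)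
          rw [hb]; exact List.prefix_append _ _
        · have h1 := lcp_prefix_left (fpath g x) (fpath g v)
          have h2 := lcp_prefix_right (fpath g x) (fpath g v)
          have h1' : lcp (fpath g x) (fpath g v) <+: fpath g y ++ [b] := by
            rw [← hb]; exact h1
          rcases prefix_concat_cases h1' with heq | hpre
          · rw [← hb] at heq
            exact absurd (heq ▸ h2) hp
          · exact prefix_lcp _ _ _ hpre h2

/-- DePa query correctness: let `v` be the current vertex of a
leaf task, i.e. every vertex whose fork-path is a strict prefix of `f(v)` with
depth at most `d(v)` precedes `v`.  Let `p = lcp (f u) (f v)`.  If `p = f(v)`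
then `u ≼ v ↔ d(u) ≤ d(v)`; otherwise, `u ≼ v ↔ d(u) ≤ SuspendedDepths[p]`,
where `SuspendedDepths[p]` is the maximum dag-depth of a vertex with fork-path
`p` preceding `v`. -/
theorem depa_query_correct (g : SP) (u v : V g)
    (hleaf : ∀ w : V g, fpath g w <+: fpath g v → fpath g w ≠ fpath g v →
      depth g w ≤ depth g v → Reach g w v) :
    (lcp (fpath g u) (fpath g v) = fpath g v →
      (Reach g u v ↔ depth g u ≤ depth g v)) ∧
    (∀ c : V g, lcp (fpath g u) (fpath g v) ≠ fpath g v →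
      fpath g c = lcp (fpath g u) (fpath g v) → Reach g c v →
      (∀ c' : V g, fpath g c' = fpath g c → Reach g c' v →
        depth g c' ≤ depth g c) →
      (Reach g u v ↔ depth g u ≤ depth g c)) := by
  constructor
  · intro hl
    constructor
    · exact fun h => reach_depth_le h
    · intro hd
      have hvu : fpath g v <+: fpath g u := by
        rw [← hl]; exact lcp_prefix_left _ _
      rcases reach_total_of_prefix g u v (Or.inr hvu) with h | h
      · exact h
      · have heq := reach_eq_of_depth_le h hd
        rw [← heq]
        exact Relation.ReflTransGen.refl
  · intro c hne hc hcv hmax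
    constructor
    · intro huv
      obtain ⟨w, hw, huw, hwv⟩ := lcp_witness huv
      exact (reach_depth_le huw).trans (hmax w (hw.trans hc.symm) hwv)
    · intro hd
      have hcu : fpath g c <+: fpath g u := by
        rw [hc]; exact lcp_prefix_left _ _
      rcases reach_total_of_prefix g u c (Or.inr hcu) with h | h
      · exact h.trans hcv
      · have heq := reach_eq_of_depth_le h hd
        rw [← heq]
        exact hcv
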